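/- The limit of value iteration is a fixed point of the Bellman operator: the pointwise supremum x* defined by x* q = ⨆ k, (F^[k] 0) q satisfies F x* = x*. (Theorem 1(b),(e): the value-iteration sequence F^[k] 0 is monotone nondecreasing and its limit is a fixed point of F.) -/

import Mathlib

open scoped ENNReal

/-- A finite infimum of pointwise suprema of monotone sequences equals the
supremum of the finite infima. -/
lemma inf'_iSup_of_monotone {ι : Type*} (s : Finset ι) (hs : s.Nonempty)
    (f : ι → ℕ → ℝ≥0∞) (hf : ∀ a, Monotone (f a)) :
    s.inf' hs (fun a => ⨆ n, f a n) = ⨆ n, s.inf' hs (fun a => f a n) := by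
  refine le_antisymm ?_ (iSup_le fun n => Finset.le_inf' _ _ fun a ha =>
    (Finset.inf'_le _ ha).trans (le_iSup (f a) n))
  
  set R := ⨆ n, s.inf' hs (fun a => f a n) with hR
  by_contra h
  push_neg at h
  have key : ∀ n : ℕ, ∃ a : {x // x ∈ s}, f a.1 n ≤ R := by
    intro n
    have : s.inf' hs (fun a => f a n) ≤ R := le_iSup (fun n => s.inf' hs (fun a => f a n)) n
    obtain ⟨a, ha, hle⟩ := Finset.exists_mem_eq_inf' hs (fun a => f a n)
    exact ⟨⟨a, ha⟩, hle ▸ this⟩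
  choose g hg using key
  haveI : Finite {x // x ∈ s} := inferInstance
  obtain ⟨a, ha⟩ := Finite.exists_infinite_fiber g
  have hainf : (g ⁻¹' {a}).Infinite := Set.infinite_coe_iff.mp ha
  have hfa : ∀ n, f a.1 n ≤ R := by
    intro n
    obtain ⟨m, hm, hnm⟩ := hainf.exists_gt n
    calc f a.1 n ≤ f a.1 m := hf a.1 hnm.le
      _ = f (g m).1 m := by rw [Set.mem_preimage, Set.mem_singleton_iff] at hm; rw [hm]
      _ ≤ R := hg m
  have : s.inf' hs (fun x => ⨆ n, f x n) ≤ R :=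
    (Finset.inf'_le _ a.2).trans (iSup_le hfa)
  exact absurd this (not_le.mpr h)

/-- Theorem 1(b),(e): the limit of value iteration is a fixed point of the
Bellman operator `F` of a branching Markov decision process. -/
theorem bellman_iterates_lfp_is_fixed {T Act : Type*} [Fintype T] [Nonempty T]
    (A : T → Finset Act) (hA : ∀ q, (A q).Nonempty)
    (c : T → Act → ℝ≥0∞) (hc : ∀ q, ∀ a ∈ A q, 0 < c q a ∧ c q a < ∞)
    (M : T → Act → T → ℝ≥0∞) (hM : ∀ q, ∀ a ∈ A q, ∀ q', M q a q' < ∞)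
    (F : (T → ℝ≥0∞) → (T → ℝ≥0∞))
    (hF : ∀ x q, F x q = (A q).inf' (hA q) (fun a => c q a + ∑ q', M q a q' * x q')) :
    F (fun q => ⨆ k, F^[k] 0 q) = fun q => ⨆ k, F^[k] 0 q := by
  -- F is monotone
  have hFmono : Monotone F := by
    intro x y hxy q
    rw [hF, hF]
    refine Finset.le_inf' _ _ fun a ha => (Finset.inf'_le _ ha).trans ?_
    exact add_le_add_right (Finset.sum_le_sum
      fun q' _ => mul_le_mul_right (hxy q') _) _
  -- iterates are monotone in k
  have hiter : ∀ k, F^[k] (0 : T → ℝ≥0∞) ≤ F^[k+1] 0 := by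
    intro k
    induction k with
    | zero => intro q; exact zero_le
    | succ n ih =>
      rw [Function.iterate_succ_apply', Function.iterate_succ_apply']
      exact hFmono ih
  have hmono : ∀ q, Monotone (fun k => F^[k] (0 : T → ℝ≥0∞) q) :=
    fun q => monotone_nat_of_le_succ fun k => hiter k q
  funext q
  rw [hF]
  have step : ∀ a ∈ A q,
      c q a + ∑ q', M q a q' * (⨆ k, F^[k] (0:T→ℝ≥0∞) q')
        = ⨆ k, (c q a + ∑ q', M q a q' * F^[k] 0 q') := by
    intro a _
    have h1 : ∀ q', M q a q' * (⨆ k, F^[k] (0:T→ℝ≥0∞) q')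
        = ⨆ k, M q a q' * F^[k] 0 q' := fun q' => by rw [ENNReal.mul_iSup]
    simp_rw [h1]
    rw [ENNReal.finsetSum_iSup_of_monotone
      (f := fun q' k => M q a q' * F^[k] (0:T→ℝ≥0∞) q')
      (fun q' => fun i j hij => mul_le_mul_right (hmono q' hij) _)]
    rw [ENNReal.add_iSup]
  calc (A q).inf' (hA q) (fun a => c q a + ∑ q', M q a q' * (⨆ k, F^[k] (0:T→ℝ≥0∞) q'))
      = (A q).inf' (hA q) (fun a => ⨆ k, (c q a + ∑ q', M q a q' * F^[k] 0 q')) :=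
        Finset.inf'_congr _ rfl (fun a ha => step a ha)
    _ = ⨆ k, (A q).inf' (hA q) (fun a => c q a + ∑ q', M q a q' * F^[k] 0 q') := by
        refine inf'_iSup_of_monotone _ _ _ fun a i j hij => ?_
        exact add_le_add_right (Finset.sum_le_sum fun q' _ =>
          mul_le_mul_right (hmono q' hij) _) _
    _ = ⨆ k, F^[k+1] (0:T→ℝ≥0∞) q := by
        refine iSup_congr fun k => ?_
        rw [Function.iterate_succ_apply', hF]
    _ = ⨆ k, F^[k] (0:T→ℝ≥0∞) q := by
        refine le_antisymm (iSup_le fun k => le_iSup (fun k => F^[k] (0:T→ℝ≥0∞) q) (k+1)) (iSup_le fun k => ?_)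
        exact (hiter k q).trans (le_iSup (fun k => F^[k+1] (0:T→ℝ≥0∞) q) k)
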